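/- Assume B_1,…,B_N are i.i.d. square-integrable with mean b̄ and variance σ_B², C_1,…,C_N are i.i.d. square-integrable with mean c̄ and variance σ_C², and the vector C is independent of the vector B. Then for any fixed N×N real matrix M, Var(Σ_{i,j} C_i M_{ij} B_j) = b̄² σ_C² Σ_i (Σ_j M_{ij})² + c̄² σ_B² Σ_j (Σ_i M_{ij})² + σ_B² σ_C² Σ_{i,j} M_{ij}². (This exact variance formula yields the computable confidence interval for the transfer function of a network with random input and output weights.) -/

import Mathlib

open MeasureTheory ProbabilityTheory

private lemma key_sum (N : ℕ) (M : Matrix (Fin N) (Fin N) ℝ) (a b c d : ℝ) :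
    ∑ i : Fin N, ∑ j : Fin N, ∑ k : Fin N, ∑ l : Fin N,
      M i j * M k l * ((a + if i = k then c else 0) * (b + if j = l then d else 0))
    = a * b * (∑ i : Fin N, ∑ j : Fin N, M i j) ^ 2
      + a * d * (∑ j : Fin N, (∑ i : Fin N, M i j) ^ 2)
      + c * b * (∑ i : Fin N, (∑ j : Fin N, M i j) ^ 2)
      + c * d * (∑ i : Fin N, ∑ j : Fin N, (M i j) ^ 2) := by
  simp only [mul_add, add_mul, mul_ite, ite_mul, mul_zero, zero_mul, Finset.sum_add_distrib,
    Finset.sum_ite_irrel, Finset.sum_const_zero,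
    Finset.sum_ite_eq, Finset.sum_ite_eq', Finset.mem_univ, if_true]
  have h3 : ∑ x : Fin N, ∑ x1 : Fin N, ∑ x2 : Fin N, M x x1 * M x2 x1 * (a * d)
      = ∑ x1 : Fin N, (∑ x : Fin N, M x x1) ^ 2 * (a * d) := by
    rw [Finset.sum_comm]
    refine Finset.sum_congr rfl fun x1 _ => ?_
    rw [sq, Finset.sum_mul_sum]
    simp only [← Finset.sum_mul, ← Finset.mul_sum]
  rw [h3]
  simp only [← Finset.sum_mul, ← Finset.mul_sum, sq]
  rw [Finset.sum_mul_sum (Finset.univ) (Finset.univ) (fun i => ∑ j, M i j) (fun i => ∑ j, M i j)]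
  ring_nf

private lemma integrable_mul_of_memL2 {Ω : Type*} [MeasurableSpace Ω] {P : Measure Ω}
    {f g : Ω → ℝ} (hf : MemLp f 2 P) (hg : MemLp g 2 P) :
    Integrable (fun ω => f ω * g ω) P := by
  have h := hf.smul (𝕜 := ℝ) hg (r := 1)
  rw [memLp_one_iff_integrable] at h
  exact (by simpa [smul_eq_mul, mul_comm] using h : Integrable (f * g) P)

/-- Exact variance formula for the bilinear form with i.i.d. square-integrable random input
weights `B` (mean `bbar`, variance `σB²`) and i.i.d. square-integrable random output
weights `C` (mean `cbar`, variance `σC²`), the vector `C` independent of the vector `B`: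
`Var(∑ᵢⱼ Cᵢ Mᵢⱼ Bⱼ) = bbar² σC² ∑ᵢ (∑ⱼ Mᵢⱼ)² + cbar² σB² ∑ⱼ (∑ᵢ Mᵢⱼ)²
  + σB² σC² ∑ᵢⱼ Mᵢⱼ²`.
This yields the computable confidence interval for the transfer function of a network with
random input and output weights. -/
theorem variance_transfer_function_random_weights
    {Ω : Type*} [MeasurableSpace Ω] (P : Measure Ω) [IsProbabilityMeasure P]
    (N : ℕ) (hN : 0 < N) (M : Matrix (Fin N) (Fin N) ℝ)
    (B C : Fin N → Ω → ℝ) (bbar cbar σB σC : ℝ)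
    (hB2 : ∀ i, MemLp (B i) 2 P)
    (hBindep : iIndepFun B P)
    (hBid : ∀ i j, IdentDistrib (B i) (B j) P P)
    (hBmean : ∀ i, ∫ ω, B i ω ∂P = bbar)
    (hBvar : ∀ i, variance (B i) P = σB ^ 2)
    (hC2 : ∀ i, MemLp (C i) 2 P)
    (hCindep : iIndepFun C P)
    (hCid : ∀ i j, IdentDistrib (C i) (C j) P P)
    (hCmean : ∀ i, ∫ ω, C i ω ∂P = cbar)
    (hCvar : ∀ i, variance (C i) P = σC ^ 2)
    (hindep : IndepFun (fun ω (i : Fin N) => C i ω) (fun ω (j : Fin N) => B j ω) P) :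
    variance (fun ω => ∑ i : Fin N, ∑ j : Fin N, C i ω * M i j * B j ω) P =
      bbar ^ 2 * σC ^ 2 * (∑ i : Fin N, (∑ j : Fin N, M i j) ^ 2) +
      cbar ^ 2 * σB ^ 2 * (∑ j : Fin N, (∑ i : Fin N, M i j) ^ 2) +
      σB ^ 2 * σC ^ 2 * ∑ i : Fin N, ∑ j : Fin N, (M i j) ^ 2 := by
  -- measurability
  have hCm : ∀ i, AEStronglyMeasurable (C i) P := fun i => (hC2 i).aestronglyMeasurable
  have hBm : ∀ i, AEStronglyMeasurable (B i) P := fun i => (hB2 i).aestronglyMeasurable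
  -- pairwise independence between products of C's and products of B's
  have hpair : ∀ i k j l : Fin N,
      IndepFun (fun ω => C i ω * C k ω) (fun ω => B j ω * B l ω) P := by
    intro i k j l
    exact hindep.comp (φ := fun x : Fin N → ℝ => x i * x k)
      (ψ := fun y : Fin N → ℝ => y j * y l)
      ((measurable_pi_apply i).mul (measurable_pi_apply k))
      ((measurable_pi_apply j).mul (measurable_pi_apply l))
  have hCB : ∀ i j : Fin N, IndepFun (C i) (B j) P := by
    intro i j
    exact hindep.comp (φ := fun x : Fin N → ℝ => x i) (ψ := fun y : Fin N → ℝ => y j)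
      (measurable_pi_apply i) (measurable_pi_apply j)
  -- second moments
  have ECC : ∀ i k : Fin N, ∫ ω, C i ω * C k ω ∂P
      = cbar ^ 2 + if i = k then σC ^ 2 else 0 := by
    intro i k
    by_cases h : i = k
    · subst h
      have hv := variance_eq_sub (hC2 i)
      rw [hCvar i, hCmean i] at hv
      have h2 : P[(C i) ^ 2] = ∫ ω, C i ω * C i ω ∂P := by
        apply integral_congr_ae
        filter_upwards with ω
        simp [sq]
      simp only [eq_self_iff_true, if_true]
      linarith
    · have := (hCindep.indepFun h).integral_mul_eq_mul_integral (hCm i) (hCm k)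
      simp only [if_neg h]
      have h' : ∫ ω, C i ω * C k ω ∂P = ∫ ω, (C i * C k) ω ∂P := by rfl
      rw [h', this, hCmean i, hCmean k]
      ring
  have EBB : ∀ j l : Fin N, ∫ ω, B j ω * B l ω ∂P
      = bbar ^ 2 + if j = l then σB ^ 2 else 0 := by
    intro j l
    by_cases h : j = l
    · subst h
      have hv := variance_eq_sub (hB2 j)
      rw [hBvar j, hBmean j] at hv
      have h2 : P[(B j) ^ 2] = ∫ ω, B j ω * B j ω ∂P := by
        apply integral_congr_ae
        filter_upwards with ω
        simp [sq]
      simp only [eq_self_iff_true, if_true]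
      linarith
    · have := (hBindep.indepFun h).integral_mul_eq_mul_integral (hBm j) (hBm l)
      simp only [if_neg h]
      have h' : ∫ ω, B j ω * B l ω ∂P = ∫ ω, (B j * B l) ω ∂P := by rfl
      rw [h', this, hBmean j, hBmean l]
      ring
  -- mixed fourth moments
  have Emix : ∀ i k j l : Fin N,
      ∫ ω, (C i ω * C k ω) * (B j ω * B l ω) ∂P
      = (cbar ^ 2 + if i = k then σC ^ 2 else 0) * (bbar ^ 2 + if j = l then σB ^ 2 else 0) := by
    intro i k j l
    have := (hpair i k j l).integral_mul_eq_mul_integral ((hCm i).mul (hCm k)) ((hBm j).mul (hBm l))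
    have h' : ∫ ω, (C i ω * C k ω) * (B j ω * B l ω) ∂P
        = ∫ ω, ((fun ω => C i ω * C k ω) * (fun ω => B j ω * B l ω)) ω ∂P := rfl
    rw [h', this, ← ECC i k, ← EBB j l]
  -- integrability of all pieces
  have hCCint : ∀ i k : Fin N, Integrable (fun ω => C i ω * C k ω) P :=
    fun i k => integrable_mul_of_memL2 (hC2 i) (hC2 k)
  have hBBint : ∀ j l : Fin N, Integrable (fun ω => B j ω * B l ω) P :=
    fun j l => integrable_mul_of_memL2 (hB2 j) (hB2 l)
  have hCBint : ∀ i j : Fin N, Integrable (fun ω => C i ω * B j ω) P := by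
    intro i j
    have := (hCB i j).integrable_mul ((hC2 i).integrable one_le_two)
      ((hB2 j).integrable one_le_two)
    simpa [Pi.mul_def] using this
  have hquadint : ∀ i k j l : Fin N,
      Integrable (fun ω => (C i ω * C k ω) * (B j ω * B l ω)) P := by
    intro i k j l
    have := (hpair i k j l).integrable_mul (hCCint i k) (hBBint j l)
    simpa [Pi.mul_def] using this
  -- the random variable S
  set S : Ω → ℝ := fun ω => ∑ i : Fin N, ∑ j : Fin N, C i ω * M i j * B j ω with hS
  -- S is in L2
  have hterm2 : ∀ i j : Fin N, MemLp (fun ω => C i ω * M i j * B j ω) 2 P := by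
    intro i j
    have hm : AEStronglyMeasurable (fun ω => C i ω * B j ω) P := (hCm i).mul (hBm j)
    have hsq : Integrable (fun ω => (C i ω * B j ω) ^ 2) P := by
      have := (hpair i i j j).integrable_mul (hCCint i i) (hBBint j j)
      have h2 : (fun ω => (C i ω * B j ω) ^ 2)
          = ((fun ω => C i ω * C i ω) * fun ω => B j ω * B j ω) := by
        funext ω; simp [Pi.mul_apply]; ring
      rw [h2]; exact this
    have hCB2 : MemLp (fun ω => C i ω * B j ω) 2 P :=
      (memLp_two_iff_integrable_sq hm).mpr hsq
    have : (fun ω => C i ω * M i j * B j ω) = fun ω => M i j * (C i ω * B j ω) := by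
      funext ω; ring
    rw [this]
    exact hCB2.const_mul (M i j)
  have hS2 : MemLp S 2 P := by
    rw [hS]
    have : (fun ω => ∑ i : Fin N, ∑ j : Fin N, C i ω * M i j * B j ω)
        = ∑ i : Fin N, ∑ j : Fin N, (fun ω => C i ω * M i j * B j ω) := by
      funext ω; simp
    rw [this]
    exact memLp_finset_sum' _ fun i _ => memLp_finset_sum' _ fun j _ => hterm2 i j
  -- mean of S
  have ES : ∫ ω, S ω ∂P = cbar * bbar * ∑ i : Fin N, ∑ j : Fin N, M i j := by
    rw [hS]
    rw [integral_finset_sum _ (fun i _ => integrable_finset_sum _ (fun j _ => by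
      have : (fun ω => C i ω * M i j * B j ω) = fun ω => M i j * (C i ω * B j ω) := by
        funext ω; ring
      rw [this]; exact (hCBint i j).const_mul _))]
    rw [Finset.mul_sum]
    refine Finset.sum_congr rfl fun i _ => ?_
    rw [integral_finset_sum _ (fun j _ => by
      have : (fun ω => C i ω * M i j * B j ω) = fun ω => M i j * (C i ω * B j ω) := by
        funext ω; ring
      rw [this]; exact (hCBint i j).const_mul _)]
    rw [Finset.mul_sum]
    refine Finset.sum_congr rfl fun j _ => ?_
    have h1 : (fun ω => C i ω * M i j * B j ω) = fun ω => M i j * (C i ω * B j ω) := by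
      funext ω; ring
    rw [h1, integral_const_mul]
    have h2 : ∫ ω, C i ω * B j ω ∂P = ∫ ω, (C i * B j) ω ∂P := rfl
    rw [h2, (hCB i j).integral_mul_eq_mul_integral (hCm i) (hBm j), hCmean i, hBmean j]
    ring
  -- second moment of S
  have ES2 : ∫ ω, S ω ^ 2 ∂P
      = ∑ i : Fin N, ∑ j : Fin N, ∑ k : Fin N, ∑ l : Fin N,
          M i j * M k l * ((cbar ^ 2 + if i = k then σC ^ 2 else 0)
            * (bbar ^ 2 + if j = l then σB ^ 2 else 0)) := by
    have hexp : ∀ ω, S ω ^ 2 = ∑ i : Fin N, ∑ j : Fin N, ∑ k : Fin N, ∑ l : Fin N,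
        M i j * M k l * ((C i ω * C k ω) * (B j ω * B l ω)) := by
      intro ω
      rw [hS, sq, Finset.sum_mul_sum]
      refine Finset.sum_congr rfl fun i _ => ?_
      rw [Finset.sum_comm]
      refine Finset.sum_congr rfl fun j _ => ?_
      rw [Finset.sum_mul_sum]
      refine Finset.sum_congr rfl fun k _ => Finset.sum_congr rfl fun l _ => ?_
      ring
    simp only [hexp]
    rw [integral_finset_sum _ (fun i _ => (integrable_finset_sum _ (fun j _ =>
      integrable_finset_sum _ (fun k _ => integrable_finset_sum _ (fun l _ =>
        ((hquadint i k j l).const_mul _))))))]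
    refine Finset.sum_congr rfl fun i _ => ?_
    rw [integral_finset_sum _ (fun j _ =>
      integrable_finset_sum _ (fun k _ => integrable_finset_sum _ (fun l _ =>
        ((hquadint i k j l).const_mul _))))]
    refine Finset.sum_congr rfl fun j _ => ?_
    rw [integral_finset_sum _ (fun k _ => integrable_finset_sum _ (fun l _ =>
        ((hquadint i k j l).const_mul _)))]
    refine Finset.sum_congr rfl fun k _ => ?_
    rw [integral_finset_sum _ (fun l _ => ((hquadint i k j l).const_mul _))]
    refine Finset.sum_congr rfl fun l _ => ?_
    rw [integral_const_mul, Emix i k j l]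
  -- put it together
  rw [variance_eq_sub hS2]
  have hS2' : P[S ^ 2] = ∫ ω, S ω ^ 2 ∂P := rfl
  have hS1' : P[S] = ∫ ω, S ω ∂P := rfl
  rw [hS2', hS1', ES2, ES, key_sum N M (cbar ^ 2) (bbar ^ 2) (σC ^ 2) (σB ^ 2)]
  ring
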